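/- Let H be a real Hilbert space, E ≥ 1 an integer, G ≥ 0, and let τ ≤ t be natural numbers with t − τ ≤ E − 1. Let η : ℕ → ℝ be positive and nonincreasing with η_τ ≤ 2·η_t. Let ι be a finite index set with weights q_k ≥ 0 and ∑_{k∈ι} q_k = 1. Fix w_τ ∈ H, and suppose for each k ∈ ι and each i with τ ≤ i ≤ t−1 there are vectors g_i^k ∈ H with ‖g_i^k‖ ≤ G; set w^k = w_τ − ∑_{i=τ}^{t−1} η_i g_i^k and w̄ = ∑_{k∈ι} q_k w^k. Then ∑_{k∈ι} q_k ‖w^k − w̄‖² ≤ 4 η_t² (E−1)² G². -/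

import Mathlib

/-- Average discrepancy caused by at most `E - 1` local gradient-descent updates of bounded
norm `G` started from a common iterate `wτ` (deterministic form of Lemma 3). -/
theorem stmt_3 {H : Type*} [NormedAddCommGroup H] [InnerProductSpace ℝ H]
    (E : ℕ) (hE : 1 ≤ E) (G : ℝ) (hG : 0 ≤ G) (τ t : ℕ) (hτt : τ ≤ t)
    (hEt : t - τ ≤ E - 1)
    (η : ℕ → ℝ) (hηpos : ∀ i, 0 < η i) (hηmono : ∀ i j, i ≤ j → η j ≤ η i)
    (hη2 : η τ ≤ 2 * η t)
    {ι : Type*} [Fintype ι] (q : ι → ℝ) (hq : ∀ k, 0 ≤ q k) (hsum : ∑ k, q k = 1)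
    (wτ : H) (g : ι → ℕ → H) (hg : ∀ k i, τ ≤ i → i ≤ t - 1 → ‖g k i‖ ≤ G)
    (w : ι → H) (hw : ∀ k, w k = wτ - ∑ i ∈ Finset.Ico τ t, η i • g k i)
    (wbar : H) (hwbar : wbar = ∑ k, q k • w k) :
    ∑ k, q k * ‖w k - wbar‖ ^ 2 ≤ 4 * η t ^ 2 * ((E : ℝ) - 1) ^ 2 * G ^ 2 := by
  have hηt := hηpos t
  have hE1 : (0:ℝ) ≤ (E:ℝ) - 1 := by
    have : (1:ℝ) ≤ E := by exact_mod_cast hE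
    linarith
  set B : ℝ := 2 * η t * ((E:ℝ) - 1) * G with hB
  have hBnn : 0 ≤ B := by positivity
  -- bound on the distance to the common start
  have hbound : ∀ k, ‖w k - wτ‖ ≤ B := by
    intro k
    rw [hw k]
    have h0 : wτ - (∑ i ∈ Finset.Ico τ t, η i • g k i) - wτ
        = -(∑ i ∈ Finset.Ico τ t, η i • g k i) := by abel
    rw [h0, norm_neg]
    calc ‖∑ i ∈ Finset.Ico τ t, η i • g k i‖
        ≤ ∑ i ∈ Finset.Ico τ t, ‖η i • g k i‖ := norm_sum_le _ _
      _ ≤ ∑ i ∈ Finset.Ico τ t, 2 * η t * G := by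
          apply Finset.sum_le_sum
          intro i hi
          rw [norm_smul, Real.norm_eq_abs, abs_of_pos (hηpos i)]
          obtain ⟨hiτ, hit⟩ := Finset.mem_Ico.mp hi
          have h1 : η i ≤ 2 * η t := le_trans (hηmono τ i hiτ) hη2
          have h2 : ‖g k i‖ ≤ G := hg k i hiτ (Nat.le_sub_one_of_lt hit)
          have := mul_le_mul h1 h2 (norm_nonneg _) (by linarith)
          linarith
      _ = ((t - τ : ℕ) : ℝ) * (2 * η t * G) := by
          rw [Finset.sum_const, Nat.card_Ico, nsmul_eq_mul]
      _ ≤ ((E:ℝ) - 1) * (2 * η t * G) := by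
          apply mul_le_mul_of_nonneg_right _ (by positivity)
          have h3 : ((t - τ : ℕ):ℝ) ≤ ((E - 1 : ℕ):ℝ) := by exact_mod_cast hEt
          have h4 : ((E - 1 : ℕ):ℝ) = (E:ℝ) - 1 := by
            rw [Nat.cast_sub hE]; norm_num
          linarith
      _ = B := by rw [hB]; ring
  -- mean property
  have hmean : ∑ k, q k • (w k - wτ) = wbar - wτ := by
    rw [hwbar]
    simp only [smul_sub, Finset.sum_sub_distrib, ← Finset.sum_smul, hsum, one_smul]
  -- variance inequality
  have key : ∑ k, q k * ‖w k - wbar‖ ^ 2 ≤ ∑ k, q k * ‖w k - wτ‖ ^ 2 := by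
    have hexp : ∀ k : ι, q k * ‖w k - wbar‖ ^ 2
        = q k * ‖w k - wτ‖ ^ 2 - 2 * (q k * inner ℝ (w k - wτ) (wbar - wτ))
          + q k * ‖wbar - wτ‖ ^ 2 := by
      intro k
      have h1 : w k - wbar = (w k - wτ) - (wbar - wτ) := by abel
      rw [h1, @norm_sub_sq_real]
      ring
    rw [Finset.sum_congr rfl fun k _ => hexp k]
    rw [Finset.sum_add_distrib, Finset.sum_sub_distrib, ← Finset.mul_sum,
      ← Finset.sum_mul, hsum, one_mul]
    have h2 : ∑ k, q k * (inner ℝ (w k - wτ) (wbar - wτ) : ℝ)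
        = ‖wbar - wτ‖ ^ 2 := by
      have : ∑ k, q k * (inner ℝ (w k - wτ) (wbar - wτ) : ℝ)
          = inner ℝ (∑ k, q k • (w k - wτ)) (wbar - wτ) := by
        rw [sum_inner]
        exact Finset.sum_congr rfl fun k _ => (real_inner_smul_left _ _ _).symm
      rw [this, hmean, real_inner_self_eq_norm_sq]
    rw [h2]
    nlinarith [sq_nonneg ‖wbar - wτ‖]
  calc ∑ k, q k * ‖w k - wbar‖ ^ 2 ≤ ∑ k, q k * ‖w k - wτ‖ ^ 2 := key
    _ ≤ ∑ k, q k * B ^ 2 := by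
        apply Finset.sum_le_sum
        intro k _
        exact mul_le_mul_of_nonneg_left
          (pow_le_pow_left₀ (norm_nonneg _) (hbound k) 2) (hq k)
    _ = B ^ 2 := by rw [← Finset.sum_mul, hsum, one_mul]
    _ = 4 * η t ^ 2 * ((E : ℝ) - 1) ^ 2 * G ^ 2 := by rw [hB]; ring
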